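/- Let (ℬ_I : I ∈ 𝒟ⁿ) with ℬ_I ⊆ 𝒟^N satisfy Jones' conditions (J1)–(J4) with constant κ_J, and set b_I = ∑_{K∈ℬ_I} h_K. Then the operator B : SL^∞_n → SL^∞_N defined by Bf = ∑_{I∈𝒟ⁿ} (⟨f, h_I⟩/‖h_I‖₂²) b_I satisfies ‖Bf‖_{SL^∞} ≤ ‖f‖_{SL^∞} for all f ∈ SL^∞_n. -/

import Mathlib

open MeasureTheory

/-- The dyadic interval `[j/2^k, (j+1)/2^k)`. -/
noncomputable def dyadicSet (k j : ℕ) : Set ℝ :=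
  Set.Ico ((j : ℝ) / 2 ^ k) (((j : ℝ) + 1) / 2 ^ k)

/-- The `L^∞`-normalized Haar function supported on `[j/2^k, (j+1)/2^k)`. -/
noncomputable def haar (k j : ℕ) (x : ℝ) : ℝ :=
  if x ∈ Set.Ico ((j : ℝ) / 2 ^ k) (((j : ℝ) + 1 / 2) / 2 ^ k) then 1
  else if x ∈ Set.Ico (((j : ℝ) + 1 / 2) / 2 ^ k) (((j : ℝ) + 1) / 2 ^ k) then -1
  else 0

/-- The point-set `B_I = ⋃ ℬ_I` of a collection of dyadic intervals. -/
noncomputable def BSet (ℬ : ℕ → ℕ → Finset (ℕ × ℕ)) (k j : ℕ) : Set ℝ :=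
  ⋃ p ∈ ℬ k j, dyadicSet p.1 p.2

/-- Real-valued measure. -/
noncomputable def msr (s : Set ℝ) : ℝ := (volume s).toReal

/-- Jones' compatibility conditions (J1)–(J4) with constant `κ` for a family
`(ℬ_I : I ∈ 𝒟ⁿ)` of collections of dyadic intervals `ℬ k j ⊆ 𝒟^N` (indexed by level and
position), where the ambient nested collection is `𝒟^N` itself. -/
def JonesD (n N : ℕ) (ℬ : ℕ → ℕ → Finset (ℕ × ℕ)) (κ : ℝ) : Prop :=
  -- (J1) & (J2): each ℬ_I is a (finite) nonempty collection of dyadic intervals of 𝒟^N,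
  -- consisting of pairwise disjoint intervals, and distinct collections are disjoint
  (∀ k j, k ≤ n → j < 2 ^ k →
    (ℬ k j).Nonempty ∧ ∀ p ∈ ℬ k j, p.1 ≤ N ∧ p.2 < 2 ^ p.1) ∧
  (∀ k j, k ≤ n → j < 2 ^ k → ∀ p ∈ ℬ k j, ∀ q ∈ ℬ k j, p ≠ q →
    dyadicSet p.1 p.2 ∩ dyadicSet q.1 q.2 = ∅) ∧
  (∀ k j k' j', k ≤ n → j < 2 ^ k → k' ≤ n → j' < 2 ^ k' → (k, j) ≠ (k', j') →
    ∀ p ∈ ℬ k j, p ∉ ℬ k' j') ∧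
  -- (J3)
  (∀ k j k' j', k ≤ n → j < 2 ^ k → k' ≤ n → j' < 2 ^ k' →
    dyadicSet k j ∩ dyadicSet k' j' = ∅ → BSet ℬ k j ∩ BSet ℬ k' j' = ∅) ∧
  (∀ k j k' j', k ≤ n → j < 2 ^ k → k' ≤ n → j' < 2 ^ k' →
    dyadicSet k j ⊆ dyadicSet k' j' → BSet ℬ k j ⊆ BSet ℬ k' j') ∧
  -- (J4)
  (∀ k j k' j', k ≤ n → j < 2 ^ k → k' ≤ n → j' < 2 ^ k' →
    dyadicSet k j ⊆ dyadicSet k' j' → ∀ p ∈ ℬ k' j',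
      msr (dyadicSet p.1 p.2 ∩ BSet ℬ k j) / msr (dyadicSet p.1 p.2)
        ≥ κ⁻¹ * msr (BSet ℬ k j) / msr (BSet ℬ k' j'))


open Classical in
lemma haar_sq (k j : ℕ) (x : ℝ) :
    (haar k j x) ^ 2 = if x ∈ dyadicSet k j then 1 else 0 := by
  have h2k : (0:ℝ) < 2 ^ k := by positivity
  have h1 : ((j:ℝ)) / 2 ^ k ≤ ((j:ℝ) + 1/2) / 2 ^ k := by gcongr <;> linarith
  have h2 : ((j:ℝ) + 1/2) / 2 ^ k ≤ ((j:ℝ) + 1) / 2 ^ k := by gcongr <;> linarith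
  unfold haar dyadicSet
  simp only [Set.mem_Ico]
  split_ifs with ha hb hc hd he
  · norm_num
  · exact absurd ⟨ha.1, lt_of_lt_of_le ha.2 h2⟩ hb
  · norm_num
  · exact absurd ⟨le_trans h1 hc.1, hc.2⟩ hd
  · exfalso
    rcases lt_or_ge x (((j:ℝ) + 1/2) / 2 ^ k) with h | h
    · exact ha ⟨he.1, h⟩
    · exact hc ⟨h, he.2⟩
  · norm_num

lemma dyadic_nested {k j k' j' : ℕ} (hk : k ≤ k')
    (h : (dyadicSet k j ∩ dyadicSet k' j').Nonempty) :
    dyadicSet k' j' ⊆ dyadicSet k j := by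
  obtain ⟨x, hx1, hx2⟩ := h
  obtain ⟨m, rfl⟩ : ∃ m, k' = k + m := ⟨k' - k, by omega⟩
  simp only [dyadicSet, Set.mem_Ico] at hx1 hx2
  have h2k : (0:ℝ) < 2 ^ k := by positivity
  have h2m : (0:ℝ) < 2 ^ m := by positivity
  have hpow : (2:ℝ) ^ (k + m) = 2 ^ k * 2 ^ m := pow_add 2 k m
  have key1 : (j:ℝ) * 2 ^ m < (j':ℝ) + 1 := by
    have hlt : (j:ℝ) / 2 ^ k < ((j':ℝ) + 1) / 2 ^ (k + m) := lt_of_le_of_lt hx1.1 hx2.2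
    rw [hpow, div_lt_div_iff₀ h2k (mul_pos h2k h2m)] at hlt
    nlinarith
  have key2 : (j':ℝ) < ((j:ℝ) + 1) * 2 ^ m := by
    have hlt : (j':ℝ) / 2 ^ (k + m) < ((j:ℝ) + 1) / 2 ^ k := lt_of_le_of_lt hx2.1 hx1.2
    rw [hpow, div_lt_div_iff₀ (mul_pos h2k h2m) h2k] at hlt
    nlinarith
  have n1 : j * 2 ^ m ≤ j' := by
    have : j * 2 ^ m < j' + 1 := by exact_mod_cast key1
    omega
  have n2 : j' + 1 ≤ (j + 1) * 2 ^ m := by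
    have : j' < (j + 1) * 2 ^ m := by exact_mod_cast key2
    omega
  intro z hz
  simp only [dyadicSet, Set.mem_Ico] at hz ⊢
  constructor
  · refine le_trans ?_ hz.1
    rw [hpow, div_le_div_iff₀ h2k (mul_pos h2k h2m)]
    have c1 : (j:ℝ) * 2 ^ m ≤ j' := by exact_mod_cast n1
    nlinarith
  · refine lt_of_lt_of_le hz.2 ?_
    rw [hpow, div_le_div_iff₀ (mul_pos h2k h2m) h2k]
    have c2 : (j':ℝ) + 1 ≤ ((j:ℝ) + 1) * 2 ^ m := by exact_mod_cast n2
    nlinarith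

lemma sum_haar_sq_le_one (s : Finset (ℕ × ℕ))
    (hd : ∀ p ∈ s, ∀ q ∈ s, p ≠ q → dyadicSet p.1 p.2 ∩ dyadicSet q.1 q.2 = ∅)
    (x : ℝ) :
    ∑ p ∈ s, (haar p.1 p.2 x) ^ 2 ≤ 1 := by
  classical
  have hcard : (s.filter (fun p => x ∈ dyadicSet p.1 p.2)).card ≤ 1 := by
    refine Finset.card_le_one.mpr (fun p hp q hq => ?_)
    by_contra hpq
    have hdisj := hd p (Finset.mem_filter.mp hp).1 q (Finset.mem_filter.mp hq).1 hpq
    have hx : x ∈ dyadicSet p.1 p.2 ∩ dyadicSet q.1 q.2 :=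
      ⟨(Finset.mem_filter.mp hp).2, (Finset.mem_filter.mp hq).2⟩
    rw [hdisj] at hx
    exact hx
  calc ∑ p ∈ s, (haar p.1 p.2 x) ^ 2
      = ∑ p ∈ s, if x ∈ dyadicSet p.1 p.2 then (1:ℝ) else 0 :=
        Finset.sum_congr rfl (fun p _ => haar_sq _ _ _)
    _ = ((s.filter (fun p => x ∈ dyadicSet p.1 p.2)).card : ℝ) := by
        rw [Finset.sum_boole]
    _ ≤ 1 := by exact_mod_cast hcard

/-- Theorem 3.3, first estimate: if `(ℬ_I : I ∈ 𝒟ⁿ)` satisfies Jones' conditions and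
`b_I = ∑_{K ∈ ℬ_I} h_K`, then the operator `Bf = ∑_I (⟨f,h_I⟩/‖h_I‖₂²) b_I` satisfies
`‖Bf‖_{SL^∞} ≤ ‖f‖_{SL^∞}` for every `f = ∑_{I ∈ 𝒟ⁿ} a_I h_I ∈ SL^∞_n`. -/
theorem jones_embedding_norm_one (n N : ℕ) (κ : ℝ) (hκ : 1 ≤ κ)
    (ℬ : ℕ → ℕ → Finset (ℕ × ℕ)) (hJ : JonesD n N ℬ κ)
    (a : ℕ → ℕ → ℝ) :
    (⨆ x ∈ Set.Ico (0 : ℝ) 1,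
        Real.sqrt (∑ k ∈ Finset.range (n + 1), ∑ j ∈ Finset.range (2 ^ k),
          ∑ p ∈ ℬ k j, (a k j) ^ 2 * (haar p.1 p.2 x) ^ 2))
      ≤ ⨆ x ∈ Set.Ico (0 : ℝ) 1,
          Real.sqrt (∑ k ∈ Finset.range (n + 1), ∑ j ∈ Finset.range (2 ^ k),
            (a k j) ^ 2 * (haar k j x) ^ 2) := by
  classical
  obtain ⟨hJ1, hJ2, _, hJ3, _, _⟩ := hJ
  set F : ℝ → ℝ := fun y => ∑ k ∈ Finset.range (n + 1), ∑ j ∈ Finset.range (2 ^ k),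
    (a k j) ^ 2 * (haar k j y) ^ 2 with hF
  set M : ℝ := ∑ k ∈ Finset.range (n + 1), ∑ j ∈ Finset.range (2 ^ k), (a k j) ^ 2 with hM
  have hFM : ∀ y, F y ≤ M := by
    intro y
    refine Finset.sum_le_sum fun k _ => Finset.sum_le_sum fun j _ => ?_
    have h1 : (haar k j y) ^ 2 ≤ 1 := by
      rw [haar_sq]; split_ifs <;> norm_num
    nlinarith [sq_nonneg (a k j)]
  have hBdd : BddAbove (Set.range (fun y => ⨆ _ : y ∈ Set.Ico (0:ℝ) 1, Real.sqrt (F y))) := by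
    refine ⟨Real.sqrt M, ?_⟩
    rintro _ ⟨y, rfl⟩
    exact Real.iSup_le (fun _ => Real.sqrt_le_sqrt (hFM y)) (Real.sqrt_nonneg _)
  have h0mem : (0:ℝ) ∈ Set.Ico (0:ℝ) 1 := by norm_num
  have hR0 : 0 ≤ ⨆ y ∈ Set.Ico (0:ℝ) 1, Real.sqrt (F y) := by
    have h1 : Real.sqrt (F 0) ≤ ⨆ y ∈ Set.Ico (0:ℝ) 1, Real.sqrt (F y) := by
      have h2 := le_ciSup hBdd (0:ℝ)
      rwa [ciSup_pos h0mem] at h2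
    exact le_trans (Real.sqrt_nonneg _) h1
  refine Real.iSup_le (fun x => Real.iSup_le (fun _ => ?_) hR0) hR0
  set T := (Finset.range (n + 1)).filter
    (fun k => ∃ j ∈ Finset.range (2 ^ k), x ∈ BSet ℬ k j) with hT
  obtain ⟨y, hy, hGF⟩ : ∃ y ∈ Set.Ico (0:ℝ) 1,
      (∑ k ∈ Finset.range (n + 1), ∑ j ∈ Finset.range (2 ^ k),
        ∑ p ∈ ℬ k j, (a k j) ^ 2 * (haar p.1 p.2 x) ^ 2) ≤ F y := by
    by_cases hTne : T.Nonempty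
    · set k₀ := T.max' hTne with hk₀def
      have hk₀mem : k₀ ∈ T := T.max'_mem hTne
      simp only [hT, Finset.mem_filter, Finset.mem_range] at hk₀mem
      obtain ⟨hk₀n, j₀, hj₀r, hxB₀⟩ := hk₀mem
      have hk₀n' : k₀ ≤ n := by omega
      have h2k₀ : (0:ℝ) < 2 ^ k₀ := by positivity
      refine ⟨(j₀:ℝ) / 2 ^ k₀, ⟨by positivity, ?_⟩, ?_⟩
      · rw [div_lt_one h2k₀]; exact_mod_cast hj₀r
      · have hyD₀ : (j₀:ℝ) / 2 ^ k₀ ∈ dyadicSet k₀ j₀ := by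
          simp only [dyadicSet, Set.mem_Ico]
          constructor
          · exact le_refl _
          · rw [div_lt_div_iff₀ h2k₀ h2k₀]; nlinarith
        refine Finset.sum_le_sum fun k hk => Finset.sum_le_sum fun j hj => ?_
        rw [Finset.mem_range] at hk hj
        by_cases hxB : x ∈ BSet ℬ k j
        · have hkT : k ∈ T := by
            simp only [hT, Finset.mem_filter, Finset.mem_range]
            exact ⟨hk, j, hj, hxB⟩
          have hkk₀ : k ≤ k₀ := T.le_max' k hkT
          have hkn : k ≤ n := by omega
          have hDD : (dyadicSet k j ∩ dyadicSet k₀ j₀).Nonempty := by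
            by_contra hc
            rw [Set.not_nonempty_iff_eq_empty] at hc
            have hBB := hJ3 k j k₀ j₀ hkn hj hk₀n' hj₀r hc
            have hxBB : x ∈ BSet ℬ k j ∩ BSet ℬ k₀ j₀ := ⟨hxB, hxB₀⟩
            rw [hBB] at hxBB
            exact hxBB
          have hyD : (j₀:ℝ) / 2 ^ k₀ ∈ dyadicSet k j := dyadic_nested hkk₀ hDD hyD₀
          rw [haar_sq, if_pos hyD, mul_one, ← Finset.mul_sum]
          exact mul_le_of_le_one_right (sq_nonneg _)
            (sum_haar_sq_le_one (ℬ k j) (hJ2 k j hkn hj) x)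
        · have hzero : ∑ p ∈ ℬ k j, (a k j) ^ 2 * (haar p.1 p.2 x) ^ 2 = 0 := by
            refine Finset.sum_eq_zero fun p hp => ?_
            rw [haar_sq, if_neg, mul_zero]
            intro hxD
            exact hxB (by simp only [BSet, Set.mem_iUnion]; exact ⟨p, hp, hxD⟩)
          rw [hzero]
          positivity
    · refine ⟨0, h0mem, ?_⟩
      have hzero : (∑ k ∈ Finset.range (n + 1), ∑ j ∈ Finset.range (2 ^ k),
          ∑ p ∈ ℬ k j, (a k j) ^ 2 * (haar p.1 p.2 x) ^ 2) = 0 := by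
        refine Finset.sum_eq_zero fun k hk => Finset.sum_eq_zero fun j hj =>
          Finset.sum_eq_zero fun p hp => ?_
        rw [haar_sq, if_neg, mul_zero]
        intro hxD
        have hxB : x ∈ BSet ℬ k j := by
          simp only [BSet, Set.mem_iUnion]; exact ⟨p, hp, hxD⟩
        refine hTne ⟨k, ?_⟩
        simp only [hT, Finset.mem_filter]
        exact ⟨hk, j, hj, hxB⟩
      rw [hzero]
      have : 0 ≤ F 0 := by positivity
      exact this
  calc Real.sqrt (∑ k ∈ Finset.range (n + 1), ∑ j ∈ Finset.range (2 ^ k),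
        ∑ p ∈ ℬ k j, (a k j) ^ 2 * (haar p.1 p.2 x) ^ 2)
      ≤ Real.sqrt (F y) := Real.sqrt_le_sqrt hGF
    _ ≤ ⨆ y ∈ Set.Ico (0:ℝ) 1, Real.sqrt (F y) := by
        have h2 := le_ciSup hBdd y
        rwa [ciSup_pos hy] at h2
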